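/- Let l₁, …, l_k ∈ ℝ be ℤ-independent. Then the map π̂_L : G_Bohr → 𝕋^k, ψ ↦ (ψ(l₁), …, ψ(l_k)), is continuous, surjective, and open. -/

import Mathlib

/-- The Bohr compactification of `ℝ`, realized as the group of all (not necessarily
continuous) group homomorphisms `(ℝ, +) → 𝕋`, viewed as a subgroup of the product group
`∏_{x ∈ ℝ} 𝕋`; as a subtype it carries the topology of pointwise convergence. -/
noncomputable def bohrSubgroup : Subgroup (ℝ → Circle) where
  carrier := {ψ | ∀ x y : ℝ, ψ (x + y) = ψ x * ψ y}
  mul_mem' := by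
    intro a b ha hb x y
    simp only [Pi.mul_apply, ha x y, hb x y]
    exact mul_mul_mul_comm _ _ _ _
  one_mem' := by intro x y; simp
  inv_mem' := by
    intro a ha x y
    simp only [Pi.inv_apply, ha x y, mul_inv]

/-- The Bohr compactification of `ℝ` (as a type, with the topology of pointwise
convergence inherited from the product `∏_{x ∈ ℝ} 𝕋`). -/
abbrev GBohr : Type := bohrSubgroup

open Pointwise

instance : CompactSpace GBohr := by
  refine isCompact_iff_compactSpace.mp ?_
  have hclosed : IsClosed (bohrSubgroup : Set (ℝ → Circle)) := by
    have : (bohrSubgroup : Set (ℝ → Circle)) =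
        ⋂ (x : ℝ) (y : ℝ), {ψ : ℝ → Circle | ψ (x + y) = ψ x * ψ y} := by
      ext ψ; simp [bohrSubgroup, Set.mem_iInter]
    rw [this]
    refine isClosed_iInter fun x => isClosed_iInter fun y => isClosed_eq ?_ ?_
    · exact continuous_apply _
    · exact (continuous_apply x).mul (continuous_apply y)
  exact hclosed.isCompact

/-- A continuous surjective homomorphism from a compact group to a T2 group is open. -/
lemma isOpenMap_of_compact_surj {G H : Type*} [Group G] [Group H]
    [TopologicalSpace G] [TopologicalSpace H] [IsTopologicalGroup G] [IsTopologicalGroup H]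
    [CompactSpace G] [T2Space H] (f : G →* H) (hc : Continuous f)
    (hs : Function.Surjective f) : IsOpenMap f := by
  have hq : Topology.IsQuotientMap f := (hc.isClosedMap).isQuotientMap hc hs
  intro U hU
  rw [← hq.isOpen_preimage]
  have : f ⁻¹' (f '' U) = U * (f.ker : Set G) := by
    ext x
    constructor
    · rintro ⟨u, hu, hfu⟩
      exact ⟨u, hu, u⁻¹ * x, by simp [MonoidHom.mem_ker, map_mul, hfu], by group⟩
    · rintro ⟨u, hu, n, hn, rfl⟩
      exact ⟨u, hu, by simp [MonoidHom.mem_ker] at hn; simp [map_mul, hn]⟩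
  rw [this]
  exact hU.mul_right

/-- For ℤ-independent reals `l₁, …, l_k`, the map
`π̂ : G_Bohr → 𝕋^k, ψ ↦ (ψ(l₁), …, ψ(l_k))` is continuous, surjective and open. -/
theorem statement7 {k : ℕ} (l : Fin k → ℝ) (hl : LinearIndependent ℚ l) :
    Continuous (fun ψ : GBohr => fun i : Fin k => (ψ : ℝ → Circle) (l i)) ∧
    Function.Surjective (fun ψ : GBohr => fun i : Fin k => (ψ : ℝ → Circle) (l i)) ∧
    IsOpenMap (fun ψ : GBohr => fun i : Fin k => (ψ : ℝ → Circle) (l i)) := by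
  have hcont : Continuous (fun ψ : GBohr => fun i : Fin k => (ψ : ℝ → Circle) (l i)) :=
    continuous_pi fun i => (continuous_apply (l i)).comp continuous_subtype_val
  have hinj : Function.Injective l := hl.injective
  have hsurj : Function.Surjective (fun ψ : GBohr => fun i : Fin k => (ψ : ℝ → Circle) (l i)) := by
    intro t
    -- choose angles
    have hex : ∀ i, ∃ a : ℝ, Circle.exp a = t i := fun i => ⟨_, Circle.exp_arg (t i)⟩
    choose a ha using hex
    -- extend to a basis of ℝ over ℚ
    have hls : LinearIndepOn ℚ id (Set.range l) := hl.linearIndepOn_id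
    let B : Module.Basis _ ℚ ℝ := Module.Basis.extend hls
    classical
    let g : ℝ → ℝ := fun x => if h : ∃ i, l i = x then a h.choose else 0
    let f : ℝ →ₗ[ℚ] ℝ := B.constr ℚ (fun b => g (b : ℝ))
    have hfl : ∀ i, f (l i) = a i := by
      intro i
      have hmem : l i ∈ hls.extend (Set.subset_univ _) :=
        hls.subset_extend _ ⟨i, rfl⟩
      have : f (B ⟨l i, hmem⟩) = g (l i) := B.constr_basis ℚ _ _
      rw [Module.Basis.extend_apply_self] at this
      rw [this]
      have h : ∃ j, l j = l i := ⟨i, rfl⟩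
      simp only [g, dif_pos h]
      rw [hinj h.choose_spec]
    refine ⟨⟨fun x => Circle.exp (f x), ?_⟩, ?_⟩
    · intro x y
      have : f (x + y) = f x + f y := map_add f x y
      simp [this, Circle.exp_add]
    · funext i
      simp [hfl i, ha i]
  refine ⟨hcont, hsurj, ?_⟩
  let F : GBohr →* (Fin k → Circle) :=
    { toFun := fun ψ => fun i => (ψ : ℝ → Circle) (l i)
      map_one' := rfl
      map_mul' := fun ψ φ => rfl }
  exact isOpenMap_of_compact_surj F hcont hsurj
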